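/- Let d ≥ 1, let ψ₁, ψ₂, ψ₃ be unit vectors in ℂ^d and let n₁, n₂, n₃ be natural numbers. Then there exists a unit vector φ ∈ ℂ^d such that for every density matrix ρ on ℂ^d one has ∏_{j=1}^3 (ψ_j† ρ ψ_j)^{n_j} ≤ ∏_{j=1}^3 |⟨φ, ψ_j⟩|^{2 n_j}; that is, the likelihood functional ρ ↦ ∏_{j=1}^3 (ψ_j† ρ ψ_j)^{n_j} built from any three pure states attains its maximum over density matrices at a pure state. -/

import Mathlib

open scoped BigOperators ComplexOrder

/-- The standard Hermitian inner product on `ℂ^d`, conjugate-linear in the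
first argument: `⟨φ, ψ⟩ = ∑ i, conj (φ i) * ψ i`. -/
noncomputable def inp {d : ℕ} (φ ψ : Fin d → ℂ) : ℂ :=
  ∑ i, (starRingEnd ℂ) (φ i) * ψ i

lemma cone3 (b : Fin 3 → (Fin 3 → ℝ)) :
    ∃ v : Fin 3 → ℝ, v ≠ 0 ∧ ∀ j, 0 ≤ ∑ i, b j i * v i := by
  set B : Matrix (Fin 3) (Fin 3) ℝ := Matrix.of b with hB
  by_cases h : B.det = 0
  · obtain ⟨v, hv0, hv⟩ := (Matrix.exists_mulVec_eq_zero_iff).mpr h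
    refine ⟨v, hv0, fun j => ?_⟩
    have := congrFun hv j
    simp [Matrix.mulVec, dotProduct, hB] at this
    simp [this]
  · refine ⟨B⁻¹.mulVec 1, ?_, fun j => ?_⟩
    · intro h0
      have : B.mulVec (B⁻¹.mulVec 1) = B.mulVec 0 := by rw [h0]
      rw [Matrix.mulVec_mulVec, Matrix.mul_nonsing_inv _ (isUnit_iff_ne_zero.mpr h), Matrix.mulVec_zero, Matrix.one_mulVec] at this
      exact one_ne_zero (congrFun this 0)
    · have : B.mulVec (B⁻¹.mulVec 1) = 1 := by
        rw [Matrix.mulVec_mulVec, Matrix.mul_nonsing_inv _ (isUnit_iff_ne_zero.mpr h), Matrix.one_mulVec]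
      have := congrFun this j
      simp [Matrix.mulVec, dotProduct, hB] at this
      simp only [Matrix.mulVec, dotProduct, hB, Pi.one_apply] at this ⊢
      simp only [mul_one] at this ⊢; rw [this]; norm_num

open Complex in
noncomputable def Qf (T m1 m2 m3 : ℝ) (a b : ℂ) : ℝ :=
  (T/2 + m1) * normSq a + (T/2 - m1) * normSq b
    + 2 * (((m2:ℂ) + (m3:ℂ) * I) * (starRingEnd ℂ) a * b).re

open Complex in
lemma Qf_lin (T m1 m2 m3 : ℝ) (a b : ℂ) :
    Qf T m1 m2 m3 a b = T/2 * (normSq a + normSq b)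
      + m1 * (normSq a - normSq b)
      + m2 * (2 * ((starRingEnd ℂ) a * b).re)
      + m3 * (-2 * ((starRingEnd ℂ) a * b).im) := by
  simp [Qf, Complex.mul_re, Complex.add_re, Complex.add_im,
    Complex.mul_im, Complex.ofReal_re, Complex.ofReal_im, Complex.I_re, Complex.I_im]
  ring

open Complex in
set_option maxHeartbeats 1000000 in
lemma core2 (T m1 m2 m3 : ℝ) (hT : 0 ≤ T) (hm : m1^2 + m2^2 + m3^2 ≤ (T/2)^2)
    (a b : Fin 3 → ℂ) :
    ∃ z1 z2 : ℂ, normSq z1 + normSq z2 = T ∧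
      ∀ j, Qf T m1 m2 m3 (a j) (b j) ≤
        normSq ((starRingEnd ℂ) z1 * a j + (starRingEnd ℂ) z2 * b j) := by
  -- the linear coefficients
  set β : Fin 3 → Fin 3 → ℝ := fun j =>
    ![normSq (a j) - normSq (b j),
      2 * ((starRingEnd ℂ) (a j) * b j).re,
      -2 * ((starRingEnd ℂ) (a j) * b j).im] with hβ
  obtain ⟨v, hv0, hv⟩ := cone3 β
  have hV : 0 < v 0 ^ 2 + v 1 ^ 2 + v 2 ^ 2 := by
    obtain ⟨i, hi⟩ := Function.ne_iff.mp hv0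
    have hpos : 0 < ∑ i : Fin 3, v i ^ 2 :=
      Finset.sum_pos' (fun i _ => sq_nonneg _)
        ⟨i, Finset.mem_univ i, sq_pos_iff.mpr (by simpa using hi)⟩
    simpa [Fin.sum_univ_three] using hpos
  set V := v 0 ^ 2 + v 1 ^ 2 + v 2 ^ 2 with hVdef
  set c := m1 * v 0 + m2 * v 1 + m3 * v 2 with hc
  set Δ := (T/2)^2 - (m1^2 + m2^2 + m3^2) with hΔ
  have hΔ0 : 0 ≤ Δ := by simp [hΔ]; linarith
  set r := Real.sqrt (c^2 + V * Δ) with hr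
  have hr2 : r^2 = c^2 + V * Δ := Real.sq_sqrt (by nlinarith)
  have hrc : c ≤ r := by
    have : |c| ≤ r := by
      rw [← Real.sqrt_sq_eq_abs]; exact Real.sqrt_le_sqrt (by nlinarith)
    exact le_trans (le_abs_self c) this
  set t := (r - c) / V with ht
  have ht0 : 0 ≤ t := div_nonneg (by linarith) hV.le
  have hquad : V * t^2 + 2 * c * t = Δ := by
    have hVne := hV.ne'
    have hVt : V * t = r - c := by rw [ht]; field_simp
    refine mul_left_cancel₀ hVne ?_
    linear_combination (V*t + (r-c) + 2*c) * hVt + hr2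
  set m1' := m1 + t * v 0 with hm1'
  set m2' := m2 + t * v 1 with hm2'
  set m3' := m3 + t * v 2 with hm3'
  have hsphere : m1'^2 + m2'^2 + m3'^2 = (T/2)^2 := by
    have expand : m1'^2 + m2'^2 + m3'^2
        = (m1^2 + m2^2 + m3^2) + 2*t*c + t^2*V := by
      simp only [hm1', hm2', hm3', hc, hVdef]; ring
    rw [expand]
    linear_combination hquad + hΔ
  -- monotonicity step
  have hstep : ∀ j, Qf T m1 m2 m3 (a j) (b j) ≤ Qf T m1' m2' m3' (a j) (b j) := by
    intro j
    have h := mul_nonneg ht0 (hv j)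
    rw [Qf_lin, Qf_lin]
    have hβj : ∑ i, β j i * v i
        = (normSq (a j) - normSq (b j)) * v 0
          + (2 * ((starRingEnd ℂ) (a j) * b j).re) * v 1
          + (-2 * ((starRingEnd ℂ) (a j) * b j).im) * v 2 := by
      simp [hβ, Fin.sum_univ_three]
    rw [hβj] at h
    simp only [hm1', hm2', hm3']
    set A := normSq (a j) with hA
    set B := normSq (b j) with hB2
    set R := ((starRingEnd ℂ) (a j) * b j).re with hR
    set Im := ((starRingEnd ℂ) (a j) * b j).im with hIm
    have hdiff : (T/2*(A+B) + (m1 + t * v 0)*(A-B) + (m2 + t * v 1)*(2*R)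
          + (m3 + t * v 2)*(-2*Im))
        - (T/2*(A+B) + m1*(A-B) + m2*(2*R) + m3*(-2*Im))
        = t * ((A-B) * v 0 + 2*R * v 1 + -2*Im * v 2) := by ring
    nlinarith [h, hdiff]
  clear_value V c Δ r t
  clear hVdef hc hΔ hr ht ht0 hquad hrc hr2 hΔ0 hV hv hβ hv0
  obtain ⟨hm1'', hm2'', hm3''⟩ : m1' = m1 + t * v 0 ∧ m2' = m2 + t * v 1 ∧ m3' = m3 + t * v 2 :=
    ⟨hm1', hm2', hm3'⟩
  clear_value m1' m2' m3'
  clear hm1' hm2' hm3' hm1'' hm2'' hm3'' hm v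
  -- now build z from m'
  set p' := T/2 + m1' with hp'
  set q' := T/2 - m1' with hq'
  have habs : m1' ^ 2 ≤ (T/2)^2 := by nlinarith [hsphere, sq_nonneg m2', sq_nonneg m3']
  obtain ⟨habs1, habs2⟩ := abs_le_of_sq_le_sq' habs (by linarith)
  have hp'0 : 0 ≤ p' := by rw [hp']; linarith
  have hq'0 : 0 ≤ q' := by rw [hq']; linarith
  have hpq : m2'^2 + m3'^2 = p' * q' := by rw [hp', hq']; nlinarith [hsphere]
  clear_value p' q'
  clear habs habs1 habs2 hsphere
  rcases eq_or_lt_of_le hp'0 with hp0 | hppos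
  · -- p' = 0 case
    have hm1T : m1' = -(T/2) := by rw [hp'] at hp0; linarith
    have h23 : m2'^2 + m3'^2 = 0 := by rw [hpq, ← hp0]; ring
    have hm2'0 : m2' = 0 := by nlinarith [sq_nonneg m2', sq_nonneg m3']
    have hm3'0 : m3' = 0 := by nlinarith [sq_nonneg m2', sq_nonneg m3']
    refine ⟨0, (Real.sqrt T : ℂ), ?_, fun j => ?_⟩
    · rw [Complex.normSq_zero, Complex.normSq_ofReal, Real.mul_self_sqrt hT, zero_add]
    · refine le_trans (hstep j) ?_
      have hql : Qf T m1' m2' m3' (a j) (b j) = T * normSq (b j) := by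
        rw [Qf_lin, hm1T, hm2'0, hm3'0]; ring
      rw [hql]
      have : (starRingEnd ℂ) (0:ℂ) * a j + (starRingEnd ℂ) ((Real.sqrt T : ℂ)) * b j
          = (Real.sqrt T : ℂ) * b j := by
        rw [Complex.conj_ofReal]; simp
      rw [this, Complex.normSq_mul, Complex.normSq_ofReal, Real.mul_self_sqrt hT]
  · -- p' > 0 case
    set s' : ℂ := (m2' : ℂ) + (m3' : ℂ) * Complex.I with hs'
    have hnss' : normSq s' = p' * q' := by
      rw [← hpq, hs']
      simp [Complex.normSq_apply]
      ring
    set rp := Real.sqrt p' with hrp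
    have hrp2 : rp ^ 2 = p' := Real.sq_sqrt hp'0
    have hrppos : 0 < rp := Real.sqrt_pos.mpr hppos
    have hrpc : (starRingEnd ℂ) ((rp:ℂ)) = (rp:ℂ) := Complex.conj_ofReal rp
    have hrne : (rp:ℂ) ≠ 0 := Complex.ofReal_ne_zero.mpr hrppos.ne'
    clear_value rp s'
    refine ⟨(rp : ℂ), (starRingEnd ℂ) s' / (rp : ℂ), ?_, fun j => ?_⟩
    · rw [Complex.normSq_div, Complex.normSq_conj, hnss', Complex.normSq_ofReal]
      have h2 : rp * rp = p' := by nlinarith [hrp2]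
      rw [h2, mul_div_cancel_left₀ _ hppos.ne']
      rw [hp', hq']; ring
    · refine le_trans (hstep j) ?_
      have hconj2 : (starRingEnd ℂ) ((starRingEnd ℂ) s' / (rp:ℂ)) = s' / (rp:ℂ) := by
        rw [map_div₀, Complex.conj_conj, hrpc]
      rw [hrpc, hconj2]
      have key : normSq ((rp:ℂ) * a j + s' / (rp:ℂ) * b j)
          = p' * normSq (a j) + q' * normSq (b j)
            + 2 * (s' * (starRingEnd ℂ) (a j) * b j).re := by
        rw [Complex.normSq_add]
        have e1 : normSq ((rp:ℂ) * a j) = p' * normSq (a j) := by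
          rw [Complex.normSq_mul, Complex.normSq_ofReal, ← hrp2]; ring
        have e2 : normSq (s' / (rp:ℂ) * b j) = q' * normSq (b j) := by
          rw [Complex.normSq_mul, Complex.normSq_div, Complex.normSq_ofReal, hnss', ← hrp2]
          have : rp * rp ≠ 0 := by positivity
          field_simp
        have e3 : ((rp:ℂ) * a j * (starRingEnd ℂ) (s' / (rp:ℂ) * b j)).re
            = (s' * (starRingEnd ℂ) (a j) * b j).re := by
          have heq : (rp:ℂ) * a j * (starRingEnd ℂ) (s' / (rp:ℂ) * b j)
              = (starRingEnd ℂ) (s' * (starRingEnd ℂ) (a j) * b j) := by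
            rw [map_mul, map_div₀, hrpc, map_mul, map_mul, Complex.conj_conj]
            field_simp
          rw [heq, Complex.conj_re]
        rw [e1, e2, e3]
      rw [key, Qf_lin]
      have hre : (s' * (starRingEnd ℂ) (a j) * b j).re
          = m2' * ((starRingEnd ℂ) (a j) * b j).re - m3' * ((starRingEnd ℂ) (a j) * b j).im := by
        rw [hs']
        simp [Complex.add_re, Complex.mul_re, Complex.mul_im, Complex.add_im]
        ring
      rw [hre, hp', hq']
      ring_nf
      linarith

lemma inp_add_left {d : ℕ} (x x' y : Fin d → ℂ) :
    inp (x + x') y = inp x y + inp x' y := by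
  simp [inp, add_mul, Finset.sum_add_distrib]

lemma inp_smul_left {d : ℕ} (c : ℂ) (x y : Fin d → ℂ) :
    inp (c • x) y = (starRingEnd ℂ) c * inp x y := by
  simp [inp, Finset.mul_sum, mul_assoc]

lemma inp_smul_right {d : ℕ} (c : ℂ) (x y : Fin d → ℂ) :
    inp x (c • y) = c * inp x y := by
  simp [inp, Finset.mul_sum]
  exact Finset.sum_congr rfl (fun i _ => by ring)

lemma inp_sub_right {d : ℕ} (x y y' : Fin d → ℂ) :
    inp x (y - y') = inp x y - inp x y' := by
  simp [inp, mul_sub, Finset.sum_sub_distrib]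

lemma inp_conj {d : ℕ} (x y : Fin d → ℂ) :
    (starRingEnd ℂ) (inp x y) = inp y x := by
  simp [inp, map_sum, mul_comm]

lemma inp_self {d : ℕ} (x : Fin d → ℂ) :
    inp x x = ((∑ i, Complex.normSq (x i) : ℝ) : ℂ) := by
  rw [inp, Complex.ofReal_sum]
  exact Finset.sum_congr rfl fun i _ => (Complex.normSq_eq_conj_mul_self).symm

lemma inp_add_right {d : ℕ} (x y y' : Fin d → ℂ) :
    inp x (y + y') = inp x y + inp x y' := by
  simp [inp, mul_add, Finset.sum_add_distrib]

lemma inp_comb_left {d : ℕ} (z1 z2 : ℂ) (x y t : Fin d → ℂ) :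
    inp (z1 • x + z2 • y) t
      = (starRingEnd ℂ) z1 * inp x t + (starRingEnd ℂ) z2 * inp y t := by
  rw [inp_add_left, inp_smul_left, inp_smul_left]

lemma inp_comb_self {d : ℕ} (z1 z2 : ℂ) (x y : Fin d → ℂ) :
    inp (z1 • x + z2 • y) (z1 • x + z2 • y)
      = ((Complex.normSq z1 : ℝ) : ℂ) * inp x x + (starRingEnd ℂ) z1 * z2 * inp x y
        + (starRingEnd ℂ) z2 * z1 * inp y x + ((Complex.normSq z2 : ℝ) : ℂ) * inp y y := by
  rw [inp_comb_left, inp_add_right, inp_add_right, inp_smul_right, inp_smul_right,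
    inp_smul_right, inp_smul_right, Complex.normSq_eq_conj_mul_self,
    Complex.normSq_eq_conj_mul_self]
  ring

lemma inp_addsmul_left {d : ℕ} (c : ℂ) (x y t : Fin d → ℂ) :
    inp (x + c • y) t = inp x t + (starRingEnd ℂ) c * inp y t := by
  rw [inp_add_left, inp_smul_left]

lemma inp_addsmul_self {d : ℕ} (c : ℂ) (x y : Fin d → ℂ) :
    inp (x + c • y) (x + c • y)
      = inp x x + c * inp x y + (starRingEnd ℂ) c * inp y x
        + ((Complex.normSq c : ℝ) : ℂ) * inp y y := by
  rw [inp_addsmul_left, inp_add_right, inp_add_right, inp_smul_right, inp_smul_right,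
    Complex.normSq_eq_conj_mul_self]
  ring

open Complex in
lemma pair_merge {d : ℕ} (ψ : Fin 3 → Fin d → ℂ) (w w' : Fin d → ℂ) :
    ∃ u : Fin d → ℂ,
      (∑ i, normSq (u i)) = (∑ i, normSq (w i)) + (∑ i, normSq (w' i)) ∧
      ∀ j, normSq (inp w (ψ j)) + normSq (inp w' (ψ j)) ≤ normSq (inp u (ψ j)) := by
  by_cases hw : w = 0
  · refine ⟨w', by simp [hw], fun j => ?_⟩
    have : inp w (ψ j) = 0 := by simp [hw, inp]
    simp [this]
  · have hP : 0 < ∑ i, normSq (w i) := by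
      obtain ⟨i, hi⟩ := Function.ne_iff.mp hw
      exact Finset.sum_pos' (fun i _ => normSq_nonneg _)
        ⟨i, Finset.mem_univ i, by simpa [normSq_pos] using hi⟩
    set P := ∑ i, normSq (w i) with hPdef
    have hPC : ((P:ℂ)) ≠ 0 := Complex.ofReal_ne_zero.mpr hP.ne'
    have hwwC : inp w w = (P:ℂ) := inp_self w
    set c : ℂ := inp w w' / (P:ℂ) with hcdef
    set g0 : Fin d → ℂ := w' - c • w with hg0
    have hwg0 : inp w g0 = 0 := by
      rw [hg0, inp_sub_right, inp_smul_right, hwwC, hcdef, div_mul_cancel₀ _ hPC, sub_self]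
    have hw'' : w' = g0 + c • w := by rw [hg0]; abel
    by_cases hg : g0 = 0
    · -- w' = c • w
      have hw' : w' = c • w := by rw [hw'', hg]; simp
      set l : ℝ := Real.sqrt (1 + normSq c) with hl
      have hl2 : l^2 = 1 + normSq c := Real.sq_sqrt (by nlinarith [normSq_nonneg c])
      refine ⟨(l:ℂ) • w, ?_, fun j => ?_⟩
      · have h1 : ∀ i, normSq (((l:ℂ) • w) i) = (1 + normSq c) * normSq (w i) := by
          intro i
          rw [Pi.smul_apply, smul_eq_mul, normSq_mul, normSq_ofReal, ← hl2]
          ring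
        have h2 : ∀ i, normSq (w' i) = normSq c * normSq (w i) := by
          intro i
          rw [hw', Pi.smul_apply, smul_eq_mul, normSq_mul]
        rw [Finset.sum_congr rfl (fun i _ => h1 i), Finset.sum_congr rfl (fun i _ => h2 i),
          ← Finset.mul_sum, ← Finset.mul_sum]
        ring
      · rw [hw', inp_smul_left, inp_smul_left, normSq_mul, normSq_mul]
        have h1 : normSq ((starRingEnd ℂ) ((l:ℂ))) = 1 + normSq c := by
          rw [normSq_conj, normSq_ofReal, ← hl2]; ring
        rw [h1, normSq_conj]
        ring_nf
        nlinarith [normSq_nonneg (inp w (ψ j))]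
    · -- genuine 2-dimensional case
      have hP' : 0 < ∑ i, normSq (g0 i) := by
        obtain ⟨i, hi⟩ := Function.ne_iff.mp hg
        exact Finset.sum_pos' (fun i _ => normSq_nonneg _)
          ⟨i, Finset.mem_univ i, by simpa [normSq_pos] using hi⟩
      set P' := ∑ i, normSq (g0 i) with hP'def
      have hg0g0 : inp g0 g0 = (P':ℂ) := inp_self g0
      have hg0w : inp g0 w = 0 := by rw [← inp_conj, hwg0, map_zero]
      set sP := Real.sqrt P with hsP
      set sP' := Real.sqrt P' with hsP'
      have hsP2 : sP^2 = P := Real.sq_sqrt hP.le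
      have hsP'2 : sP'^2 = P' := Real.sq_sqrt hP'.le
      have hsPpos : 0 < sP := Real.sqrt_pos.mpr hP
      have hsP'pos : 0 < sP' := Real.sqrt_pos.mpr hP'
      have hsPne : ((sP:ℂ)) ≠ 0 := Complex.ofReal_ne_zero.mpr hsPpos.ne'
      have hsP'ne : ((sP':ℂ)) ≠ 0 := Complex.ofReal_ne_zero.mpr hsP'pos.ne'
      set e : Fin d → ℂ := ((sP:ℂ))⁻¹ • w with he
      set f : Fin d → ℂ := ((sP':ℂ))⁻¹ • g0 with hf
      have hee : inp e e = 1 := by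
        rw [he, inp_smul_left, inp_smul_right, hwwC, map_inv₀, Complex.conj_ofReal]
        rw [← hsP2]
        push_cast
        field_simp
      have hff : inp f f = 1 := by
        rw [hf, inp_smul_left, inp_smul_right, hg0g0, map_inv₀, Complex.conj_ofReal]
        rw [← hsP'2]
        push_cast
        field_simp
      have hef : inp e f = 0 := by
        rw [he, hf, inp_smul_left, inp_smul_right, hwg0]; ring
      have hfe : inp f e = 0 := by rw [← inp_conj, hef, map_zero]
      set s : ℂ := (sP:ℂ) * c with hs
      set A : Fin 3 → ℂ := fun j => inp e (ψ j) with hA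
      set B : Fin 3 → ℂ := fun j => inp f (ψ j) with hB
      -- expressing the original inner products
      have hAw : ∀ j, inp w (ψ j) = (sP:ℂ) * A j := by
        intro j
        rw [hA]
        simp only [he, inp_smul_left, map_inv₀, Complex.conj_ofReal]
        field_simp
      have hBg : ∀ j, inp g0 (ψ j) = (sP':ℂ) * B j := by
        intro j
        rw [hB]
        simp only [hf, inp_smul_left, map_inv₀, Complex.conj_ofReal]
        field_simp
      have hw'e : ∀ j, inp w' (ψ j) = (starRingEnd ℂ) s * A j + (sP':ℂ) * B j := by
        intro j
        rw [hw'', inp_add_left, inp_smul_left, hAw j, hBg j, hs, map_mul, Complex.conj_ofReal]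
        ring
      -- the 2x2 data
      set T : ℝ := P + normSq s + P' with hT
      set m1 : ℝ := (P + normSq s - P')/2 with hm1
      set m2 : ℝ := (s * (sP':ℂ)).re with hm2
      set m3 : ℝ := (s * (sP':ℂ)).im with hm3
      have hTnn : 0 ≤ T := by
        rw [hT]; nlinarith [normSq_nonneg s, hP.le, hP'.le]
      have hmble : m1^2 + m2^2 + m3^2 ≤ (T/2)^2 := by
        have h23 : m2^2 + m3^2 = normSq s * P' := by
          have hn : normSq (s * (sP':ℂ)) = normSq s * P' := by
            rw [normSq_mul, normSq_ofReal, ← hsP'2]; ring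
          rw [hm2, hm3, ← hn, normSq_apply]; ring
        rw [hm1, hT]
        nlinarith [h23, normSq_nonneg s, hP.le, hP'.le,
          mul_nonneg hP.le hP'.le]
      obtain ⟨z1, z2, hz, hzle⟩ := core2 T m1 m2 m3 hTnn hmble A B
      have huψ : ∀ j, inp (z1 • e + z2 • f) (ψ j)
          = (starRingEnd ℂ) z1 * A j + (starRingEnd ℂ) z2 * B j := by
        intro j
        rw [inp_comb_left, hA, hB]
      refine ⟨z1 • e + z2 • f, ?_, fun j => ?_⟩
      · -- norms
        have huu : inp (z1 • e + z2 • f) (z1 • e + z2 • f) = ((T:ℝ):ℂ) := by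
          rw [inp_comb_self, hee, hef, hfe, hff, ← hz]
          push_cast
          ring
        have hw'w' : inp w' w' = ((normSq c * P + P' : ℝ):ℂ) := by
          rw [hw'', inp_addsmul_self, hwg0, hg0w, hg0g0, hwwC]
          push_cast
          ring
        have h1 : ((∑ i, normSq ((z1 • e + z2 • f) i) : ℝ) : ℂ) = ((T:ℝ):ℂ) := by
          rw [← inp_self, huu]
        have h2 : ((∑ i, normSq (w' i) : ℝ) : ℂ) = ((normSq c * P + P' : ℝ):ℂ) := by
          rw [← inp_self, hw'w']
        have h1' := Complex.ofReal_inj.mp h1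
        have h2' := Complex.ofReal_inj.mp h2
        rw [h1', h2', hT, hs]
        rw [normSq_mul, normSq_ofReal, ← hsP2]
        ring
      · -- the inequality
        rw [huψ j]
        refine le_trans (le_of_eq ?_) (hzle j)
        rw [hAw j, hw'e j]
        rw [normSq_mul, normSq_ofReal, Complex.normSq_add, normSq_mul, normSq_mul,
          normSq_conj, normSq_ofReal]
        have hcross : ((starRingEnd ℂ) s * A j * ((starRingEnd ℂ) ((sP':ℂ) * B j)))
            = (starRingEnd ℂ) (s * (starRingEnd ℂ) (A j) * B j) * ((sP':ℂ)) := by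
          simp only [map_mul, Complex.conj_conj, Complex.conj_ofReal]
          ring
        rw [hcross]
        rw [Qf]
        have hsm : ((m2:ℂ) + (m3:ℂ) * Complex.I) = s * (sP':ℂ) := by
          rw [hm2, hm3]; exact Complex.re_add_im _
        rw [hsm]
        have hre1 : ((starRingEnd ℂ) (s * (starRingEnd ℂ) (A j) * B j) * ((sP':ℂ))).re
            = sP' * (s * (starRingEnd ℂ) (A j) * B j).re := by
          rw [mul_comm, Complex.re_ofReal_mul, Complex.conj_re]
        have hre2 : (s * (sP':ℂ) * (starRingEnd ℂ) (A j) * (B j)).re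
            = sP' * (s * (starRingEnd ℂ) (A j) * B j).re := by
          have : s * (sP':ℂ) * (starRingEnd ℂ) (A j) * (B j)
              = ((sP':ℂ)) * (s * (starRingEnd ℂ) (A j) * B j) := by ring
          rw [this, Complex.re_ofReal_mul]
        rw [hre1, hre2, hT, hm1]
        rw [← hsP2, ← hsP'2]
        ring

open Complex in
lemma merge_fold {d : ℕ} (ψ : Fin 3 → Fin d → ℂ) {ι : Type*} [DecidableEq ι]
    (W : ι → Fin d → ℂ) (s : Finset ι) :
    ∃ u : Fin d → ℂ,
      (∑ i, normSq (u i)) = ∑ k ∈ s, ∑ i, normSq (W k i) ∧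
      ∀ j, ∑ k ∈ s, normSq (inp (W k) (ψ j)) ≤ normSq (inp u (ψ j)) := by
  induction s using Finset.induction_on with
  | empty => exact ⟨0, by simp, fun j => by simp [inp, normSq_nonneg]⟩
  | insert k s hk ih =>
      obtain ⟨u, hu1, hu2⟩ := ih
      obtain ⟨u', h1, h2⟩ := pair_merge ψ u (W _)
      refine ⟨u', ?_, fun j => ?_⟩
      · rw [Finset.sum_insert hk, h1, hu1]; ring
      · rw [Finset.sum_insert hk]
        have := h2 j
        have := hu2 j
        linarith

open Complex in
lemma exists_max (d : ℕ) (hd : 1 ≤ d) (ψ : Fin 3 → Fin d → ℂ) (n : Fin 3 → ℕ) :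
    ∃ φ : Fin d → ℂ, (∑ i, normSq (φ i)) = 1 ∧
      ∀ x : Fin d → ℂ, (∑ i, normSq (x i)) = 1 →
        (∏ j, normSq (inp x (ψ j)) ^ (n j)) ≤ ∏ j, normSq (inp φ (ψ j)) ^ (n j) := by
  set K : Set (Fin d → ℂ) := {x | (∑ i, normSq (x i)) = 1} with hK
  have hFcont : Continuous (fun x : Fin d → ℂ => ∑ i, normSq (x i)) := by
    apply continuous_finset_sum
    intro i _
    exact Complex.continuous_normSq.comp (continuous_apply i)
  have hKclosed : IsClosed K := isClosed_eq hFcont continuous_const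
  have hKsub : K ⊆ Metric.closedBall 0 1 := by
    intro x hx
    rw [Metric.mem_closedBall, dist_zero_right]
    rw [pi_norm_le_iff_of_nonneg zero_le_one]
    intro i
    have h1 : normSq (x i) ≤ 1 := by
      have := Finset.single_le_sum (f := fun i => normSq (x i))
        (fun i _ => normSq_nonneg _) (Finset.mem_univ i)
      rw [hx] at this
      exact this
    have h2 : ‖x i‖ ^ 2 = normSq (x i) := Complex.sq_norm (x i)
    nlinarith [norm_nonneg (x i)]
  have hKcompact : IsCompact K :=
    (isCompact_closedBall (0 : Fin d → ℂ) 1).of_isClosed_subset hKclosed hKsub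
  have hKne : K.Nonempty := by
    refine ⟨fun i => if i = ⟨0, hd⟩ then 1 else 0, ?_⟩
    have : ∀ i : Fin d, normSq (if i = ⟨0, hd⟩ then (1:ℂ) else 0)
        = if i = ⟨0, hd⟩ then (1:ℝ) else 0 := by
      intro i; split <;> simp
    simp only [hK, Set.mem_setOf_eq, this]
    simp
  have hGcont : Continuous (fun x : Fin d → ℂ => ∏ j, normSq (inp x (ψ j)) ^ (n j)) := by
    apply continuous_finset_prod
    intro j _
    apply Continuous.pow
    apply Complex.continuous_normSq.comp
    unfold inp
    apply continuous_finset_sum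
    intro i _
    exact (Complex.continuous_conj.comp (continuous_apply i)).mul continuous_const
  obtain ⟨φ, hφK, hφmax⟩ := hKcompact.exists_isMaxOn hKne hGcont.continuousOn
  exact ⟨φ, hφK, fun x hx => hφmax hx⟩

open scoped MatrixOrder in
lemma exists_herm_sqrt {d : ℕ} (ρ : Matrix (Fin d) (Fin d) ℂ) (hρ : ρ.PosSemidef) :
    ∃ S : Matrix (Fin d) (Fin d) ℂ, S * S = ρ ∧ S.conjTranspose = S :=
  ⟨CFC.sqrt ρ, CFC.sqrt_mul_sqrt_self ρ hρ.nonneg, (show (CFC.sqrt ρ).IsHermitian by simpa using (CFC.sqrt_nonneg ρ).1).eq⟩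

theorem stmt7 (d : ℕ) (hd : 1 ≤ d)
    (ψ : Fin 3 → (Fin d → ℂ)) (hψ : ∀ j, inp (ψ j) (ψ j) = 1)
    (n : Fin 3 → ℕ) :
    ∃ φ : Fin d → ℂ, inp φ φ = 1 ∧
      ∀ ρ : Matrix (Fin d) (Fin d) ℂ, ρ.PosSemidef → ρ.trace = 1 →
        ∏ j, (dotProduct (star (ψ j)) (ρ.mulVec (ψ j))).re ^ (n j)
          ≤ ∏ j, ‖inp φ (ψ j)‖ ^ (2 * n j) := by
  obtain ⟨φ, hφ1, hφmax⟩ := exists_max d hd ψ n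
  refine ⟨φ, by rw [inp_self, hφ1, Complex.ofReal_one], ?_⟩
  intro ρ hρ htr
  obtain ⟨S, hS, hherm⟩ := exists_herm_sqrt ρ hρ
  -- key identity
  have hkey : ∀ x : Fin d → ℂ, dotProduct (star x) (ρ.mulVec x)
      = inp (S.mulVec x) (S.mulVec x) := by
    intro x
    rw [← hS, ← Matrix.mulVec_mulVec, Matrix.dotProduct_mulVec]
    have hstar : star (S.mulVec x) = Matrix.vecMul (star x) S := by
      rw [Matrix.star_mulVec, hherm]
    rw [← hstar]
    simp [dotProduct, inp, Pi.star_apply, Complex.star_def]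
  -- rows of S
  set W : Fin d → Fin d → ℂ := fun k i => (starRingEnd ℂ) (S k i) with hW
  have hWy : ∀ (x : Fin d → ℂ) (k : Fin d), inp (W k) x = S.mulVec x k := by
    intro x k
    simp [inp, hW, Matrix.mulVec, dotProduct]
  -- trace identity
  have htrace : ∑ k, ∑ i, Complex.normSq (W k i) = 1 := by
    have h1 : ρ.trace = ((∑ k, ∑ i, Complex.normSq (W k i) : ℝ) : ℂ) := by
      rw [← hS, Matrix.trace]
      push_cast
      apply Finset.sum_congr rfl
      intro k _
      rw [Matrix.diag]
      rw [Matrix.mul_apply]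
      apply Finset.sum_congr rfl
      intro i _
      have : S i k = (starRingEnd ℂ) (S k i) := by
        conv_lhs => rw [← hherm]
        rfl
      rw [this, Complex.normSq_eq_conj_mul_self]
      simp [hW, Complex.normSq_conj]
    rw [htr] at h1
    exact_mod_cast h1.symm
  obtain ⟨u, hu1, hu2⟩ := merge_fold ψ W Finset.univ
  rw [htrace] at hu1
  -- each likelihood term
  have hell : ∀ j, (dotProduct (star (ψ j)) (ρ.mulVec (ψ j))).re
      = ∑ k, Complex.normSq (inp (W k) (ψ j)) := by
    intro j
    rw [hkey, inp_self]
    rw [Complex.ofReal_re]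
    apply Finset.sum_congr rfl
    intro k _
    rw [hWy]
  calc ∏ j, (dotProduct (star (ψ j)) (ρ.mulVec (ψ j))).re ^ (n j)
      ≤ ∏ j, Complex.normSq (inp u (ψ j)) ^ (n j) := by
        apply Finset.prod_le_prod
        · intro j _
          apply pow_nonneg
          rw [hell j]
          exact Finset.sum_nonneg fun k _ => Complex.normSq_nonneg _
        · intro j _
          apply pow_le_pow_left₀
          · rw [hell j]
            exact Finset.sum_nonneg fun k _ => Complex.normSq_nonneg _
          · rw [hell j]
            exact hu2 j
    _ ≤ ∏ j, Complex.normSq (inp φ (ψ j)) ^ (n j) := hφmax u hu1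
    _ = ∏ j, ‖inp φ (ψ j)‖ ^ (2 * n j) := by
        apply Finset.prod_congr rfl
        intro j _
        rw [pow_mul, Complex.sq_norm]
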